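/- Let n ≥ 2, 0 < s < 1, 1 ≤ p < n/s. There is a constant C > 0 depending only on n, s, p such that for every measurable set E ⊂ ℝⁿ with 0 < |E| < ∞ and every x ∈ ℝⁿ, ∫_{ℝⁿ\E} dy/|x-y|^{n+sp} ≥ C |E|^{-sp/n}. -/

import Mathlib

open MeasureTheory Set Filter
open scoped ENNReal NNReal Topology

noncomputable def Lunder (n : ℕ) (α : ℝ) (φ : ℝ → ℝ) : ℝ≥0∞ :=
  ⨆ x ∈ Set.Ioi (0:ℝ), ∫⁻ t in Set.Ioo (0:ℝ) 1,
    ENNReal.ofReal (φ (t ^ (1 - α) * x) / (φ x * t ^ (n + 1)))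

noncomputable def Lover (n : ℕ) (α : ℝ) (φ : ℝ → ℝ) : ℝ≥0∞ :=
  ⨆ x ∈ Set.Ioi (0:ℝ), ∫⁻ t in Set.Ioi (1:ℝ),
    ENNReal.ofReal (φ (t ^ (-α) * x) / (φ x * t ^ (n + 1)))

noncomputable def besovSet (n : ℕ) (α : ℝ) (φ : ℝ → ℝ)
    (Ω : Set (EuclideanSpace ℝ (Fin n))) (u : EuclideanSpace ℝ (Fin n) → ℝ) : Set ℝ :=
  {l : ℝ | 0 < l ∧
    (∫⁻ x in Ω, ∫⁻ y in Ω,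
      ENNReal.ofReal (φ (|u x - u y| / (l * ‖x - y‖ ^ α)) / ‖x - y‖ ^ (2 * n))) ≤ 1}

theorem stmt14 (n : ℕ) (hn : 2 ≤ n) (s p : ℝ) (hs1 : 0 < s) (hs2 : s < 1)
    (hp1 : 1 ≤ p) (hp2 : p < (n : ℝ) / s) :
    ∃ C > (0:ℝ), ∀ E : Set (EuclideanSpace ℝ (Fin n)), MeasurableSet E →
      0 < volume E → volume E < ⊤ → ∀ x : EuclideanSpace ℝ (Fin n),
      ENNReal.ofReal (C * (volume E).toReal ^ (-(s * p) / (n : ℝ)))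
        ≤ ∫⁻ y in Eᶜ, ENNReal.ofReal (1 / ‖x - y‖ ^ ((n : ℝ) + s * p)) := by
  have hn0 : (0:ℝ) < n := by positivity
  have hsp : 0 < s * p := by positivity
  set e : ℝ := (n : ℝ) + s * p with he
  have he0 : 0 < e := by positivity
  set ω : ℝ := (volume (Metric.ball (0 : EuclideanSpace ℝ (Fin n)) 1)).toReal with hω
  have hωfin : volume (Metric.ball (0 : EuclideanSpace ℝ (Fin n)) 1) < ⊤ :=
    measure_ball_lt_top
  have hω0 : 0 < ω :=
    ENNReal.toReal_pos (Metric.measure_ball_pos _ _ one_pos).ne' hωfin.ne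
  haveI : Nontrivial (EuclideanSpace ℝ (Fin n)) :=
    Module.nontrivial_of_finrank_pos (R := ℝ)
      (by rw [finrank_euclideanSpace_fin]; omega)
  refine ⟨(ω / 2) ^ (e / n), by positivity, ?_⟩
  intro E hE hE0 hEtop x
  set m : ℝ := (volume E).toReal with hm
  have hm0 : 0 < m := ENNReal.toReal_pos hE0.ne' hEtop.ne
  set a : ℝ := 2 * m / ω with ha
  have ha0 : 0 < a := by positivity
  set r : ℝ := a ^ ((n : ℝ)⁻¹) with hr
  have hr0 : 0 < r := Real.rpow_pos_of_pos ha0 _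
  -- volume of the ball
  have hballvol : volume (Metric.ball x r) = ENNReal.ofReal (2 * m) := by
    rw [Measure.addHaar_ball volume x hr0.le, finrank_euclideanSpace_fin]
    have hrn : r ^ n = a := by
      rw [hr, ← Real.rpow_natCast (a ^ ((n:ℝ)⁻¹)) n, ← Real.rpow_mul ha0.le,
        inv_mul_cancel₀ hn0.ne', Real.rpow_one]
    rw [hrn, ← ENNReal.ofReal_toReal hωfin.ne, ← hω, ← ENNReal.ofReal_mul ha0.le,
      ha, div_mul_cancel₀ _ hω0.ne']
  -- lower bound for the measure of ball \ E
  have hdiff : ENNReal.ofReal m ≤ volume (Metric.ball x r \ E) := by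
    have h1 : ENNReal.ofReal m = volume (Metric.ball x r) - volume E := by
      rw [hballvol, ← ENNReal.ofReal_toReal hEtop.ne, ← hm,
        ← ENNReal.ofReal_sub _ hm0.le]
      ring_nf
    rw [h1]; exact le_measure_diff
  -- pointwise bound on the ball
  have hpt : ∀ᵐ y ∂(volume.restrict (Metric.ball x r \ E)),
      ENNReal.ofReal (1 / r ^ e) ≤ ENNReal.ofReal (1 / ‖x - y‖ ^ e) := by
    have hx : ∀ᵐ y : EuclideanSpace ℝ (Fin n), y ≠ x := by
      have h0 : volume ({x} : Set (EuclideanSpace ℝ (Fin n))) = 0 := measure_singleton x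
      rw [ae_iff]
      simpa [not_not, Set.setOf_eq_eq_singleton] using h0
    filter_upwards [ae_restrict_of_ae hx, ae_restrict_mem (measurableSet_ball.diff hE)]
      with y hy hyS
    have hlt : ‖x - y‖ < r := by
      have := hyS.1
      rw [Metric.mem_ball, dist_eq_norm] at this
      rwa [norm_sub_rev]
    have hpos : 0 < ‖x - y‖ := by
      rwa [norm_sub_pos_iff, ne_comm]
    apply ENNReal.ofReal_le_ofReal
    apply one_div_le_one_div_of_le (Real.rpow_pos_of_pos hpos _)
    exact Real.rpow_le_rpow hpos.le hlt.le he0.le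
  -- bound the integral
  have hineq : ENNReal.ofReal (1 / r ^ e) * ENNReal.ofReal m
      ≤ ∫⁻ y in Eᶜ, ENNReal.ofReal (1 / ‖x - y‖ ^ e) := by
    calc ENNReal.ofReal (1 / r ^ e) * ENNReal.ofReal m
        ≤ ENNReal.ofReal (1 / r ^ e) * volume (Metric.ball x r \ E) := by
          exact mul_le_mul_right hdiff _
      _ = ∫⁻ _ in Metric.ball x r \ E, ENNReal.ofReal (1 / r ^ e) := by
          rw [setLIntegral_const, mul_comm]
      _ ≤ ∫⁻ y in Metric.ball x r \ E, ENNReal.ofReal (1 / ‖x - y‖ ^ e) :=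
          lintegral_mono_ae hpt
      _ ≤ ∫⁻ y in Eᶜ, ENNReal.ofReal (1 / ‖x - y‖ ^ e) :=
          lintegral_mono_set (fun y hy => hy.2)
  refine le_trans (le_of_eq ?_) hineq
  rw [← ENNReal.ofReal_mul (by positivity)]
  congr 1
  -- real arithmetic: (ω/2)^(e/n) * m^(-(s*p)/n) = 1/r^e * m
  have hre : r ^ e = a ^ (e / n) := by
    rw [hr, ← Real.rpow_mul ha0.le, inv_mul_eq_div]
  have haexp : a ^ (e / n) = (2 / ω) ^ (e / n) * m ^ (e / n) := by
    rw [ha, show 2 * m / ω = 2 / ω * m by ring, Real.mul_rpow (by positivity) hm0.le]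
  rw [hre, haexp]
  rw [one_div, mul_inv, ← Real.rpow_neg (by positivity), ← Real.rpow_neg hm0.le]
  rw [show (2 / ω : ℝ) ^ (-(e / n)) = (ω / 2) ^ (e / n) from by
    rw [Real.rpow_neg (by positivity), ← Real.inv_rpow (by positivity), inv_div]]
  have hmm : m ^ (-(e / n)) * m = m ^ (-(s * p) / n) := by
    nth_rewrite 2 [← Real.rpow_one m]
    rw [← Real.rpow_add hm0]
    congr 1
    field_simp [he]
    linarith
  rw [mul_assoc, hmm]
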